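/- Let A = {A_1, …, A_n} be a convex boundary (each A_i is a nonempty convex compact) in a finite-dimensional real normed space X, let d be a solution vector for A with all d_i > 0, let K_d = ⋂_{i=1}^n B_{d_i}(A_i), let F_j be the set of far points of A_j, and let HP_d(F) = ⋃_{j=1}^n (B_{d_j}(F_j) ∩ K_d). Then for every index i there exists a point p ∈ HP_d(F) such that p ∈ B_{d_i}(F_i) ∩ K_d or p ∈ ∂B_{d_i}(A_i). -/

import Mathlib

open Metric Set

section Aux

variable {X : Type*} [NormedAddCommGroup X] [NormedSpace ℝ X]

omit [NormedSpace ℝ X] in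
lemma aux_mem_cthickening_iff {E : Set X} (hE : E.Nonempty) {δ : ℝ} (hδ : 0 ≤ δ)
    {x : X} : x ∈ cthickening δ E ↔ infDist x E ≤ δ := by
  rw [Metric.mem_cthickening_iff, Metric.infDist,
    ← ENNReal.le_ofReal_iff_toReal_le (Metric.infEdist_ne_top hE) hδ]

omit [NormedSpace ℝ X] in
lemma aux_le_infDist {E : Set X} (hE : E.Nonempty) {x : X} {r : ℝ}
    (h : ∀ y ∈ E, r ≤ dist x y) : r ≤ infDist x E := by
  by_contra hlt
  push_neg at hlt
  obtain ⟨y, hy, hdy⟩ := (infDist_lt_iff hE).1 hlt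
  exact absurd hdy (not_lt.2 (h y hy))

lemma aux_infDist_combo {E : Set X} (hconv : Convex ℝ E) (hc : IsCompact E) (hne : E.Nonempty)
    (x y : X) {t : ℝ} (h0 : 0 ≤ t) (h1 : t ≤ 1) :
    infDist ((1 - t) • x + t • y) E ≤ (1 - t) * infDist x E + t * infDist y E := by
  obtain ⟨ax, haxE, hax⟩ := hc.exists_infDist_eq_dist hne x
  obtain ⟨ay, hayE, hay⟩ := hc.exists_infDist_eq_dist hne y
  have hmem : (1 - t) • ax + t • ay ∈ E := hconv haxE hayE (by linarith) h0 (by ring)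
  have hdiff : (1 - t) • x + t • y - ((1 - t) • ax + t • ay)
      = (1 - t) • (x - ax) + t • (y - ay) := by module
  calc infDist ((1 - t) • x + t • y) E
      ≤ dist ((1 - t) • x + t • y) ((1 - t) • ax + t • ay) := infDist_le_dist_of_mem hmem
    _ = ‖(1 - t) • (x - ax) + t • (y - ay)‖ := by rw [dist_eq_norm, hdiff]
    _ ≤ ‖(1 - t) • (x - ax)‖ + ‖t • (y - ay)‖ := norm_add_le _ _
    _ = (1 - t) * ‖x - ax‖ + t * ‖y - ay‖ := by
        rw [norm_smul, norm_smul, Real.norm_eq_abs, Real.norm_eq_abs,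
          abs_of_nonneg (by linarith : (0:ℝ) ≤ 1 - t), abs_of_nonneg h0]
    _ = (1 - t) * infDist x E + t * infDist y E := by
        rw [hax, hay, dist_eq_norm, dist_eq_norm]

lemma aux_mem_frontier {E : Set X} (hconv : Convex ℝ E) (hc : IsCompact E) (hne : E.Nonempty)
    {δ : ℝ} (hδ : 0 < δ) {p : X} (hp : infDist p E = δ) :
    p ∈ frontier (cthickening δ E) := by
  have hne' := hne
  obtain ⟨a₀, ha₀⟩ := hne'
  rw [frontier, (isClosed_cthickening (δ := δ) (E := E)).closure_eq]
  refine ⟨(aux_mem_cthickening_iff hne hδ.le).2 hp.le, ?_⟩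
  intro hint
  -- points p + s • (p - a₀) are outside the cthickening for every s > 0
  have key : ∀ s : ℝ, 0 < s → p + s • (p - a₀) ∉ cthickening δ E := by
    intro s hs hsmem
    have hle : infDist (p + s • (p - a₀)) E ≤ δ :=
      (aux_mem_cthickening_iff hne hδ.le).1 hsmem
    set t : ℝ := s / (1 + s) with ht
    have h1s : (0:ℝ) < 1 + s := by linarith
    have ht0 : 0 ≤ t := by positivity
    have ht1 : t ≤ 1 := by
      rw [ht, div_le_one h1s]; linarith
    have hcombo : (1 - t) • (p + s • (p - a₀)) + t • a₀ = p := by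
      have h1t : 1 - t = 1 / (1 + s) := by
        rw [ht]; field_simp; ring
      rw [h1t, ht]
      match_scalars <;> field_simp <;> ring
    have hcb := aux_infDist_combo hconv hc hne (p + s • (p - a₀)) a₀ ht0 ht1
    rw [hcombo, hp, infDist_zero_of_mem ha₀, mul_zero, add_zero] at hcb
    -- δ ≤ (1 - t) * infDist (p + s • (p - a₀)) E ≤ (1 - t) * δ < δ
    have h1t' : 1 - t < 1 := by
      have : 0 < t := by positivity
      linarith
    have hpos : 0 < infDist (p + s • (p - a₀)) E := lt_of_lt_of_le hδ (by
      nlinarith [infDist_nonneg (x := p + s • (p - a₀)) (s := E)])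
    nlinarith
  -- but these points tend to p, which is interior: contradiction
  have htend : Filter.Tendsto (fun k : ℕ => p + (1 / ((k:ℝ) + 1)) • (p - a₀))
      Filter.atTop (nhds p) := by
    have h0 := tendsto_one_div_add_atTop_nhds_zero_nat (𝕜 := ℝ)
    have := (h0.smul_const (p - a₀))
    simpa using Filter.Tendsto.const_add p this
  have hev : ∀ᶠ k : ℕ in Filter.atTop,
      p + (1 / ((k:ℝ) + 1)) • (p - a₀) ∈ interior (cthickening δ E) :=
    htend.eventually_mem (isOpen_interior.mem_nhds hint)
  obtain ⟨k, hk⟩ := hev.exists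
  exact key (1 / ((k:ℝ) + 1)) (by positivity) (interior_subset hk)

end Aux

/-- `steinerSum A K = ∑ i, d_H(A_i, K)` — the functional from the Fermat–Steiner problem. -/
noncomputable def steinerSum {X : Type*} [PseudoMetricSpace X] {n : ℕ}
    (A : Fin n → Set X) (K : Set X) : ℝ :=
  ∑ i, Metric.hausdorffDist (A i) K

/-- A Steiner compact for the boundary `A`: a nonempty compact set minimizing
`steinerSum A` over nonempty compact sets. -/
def IsSteinerCompact {X : Type*} [PseudoMetricSpace X] {n : ℕ}
    (A : Fin n → Set X) (K : Set X) : Prop :=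
  K.Nonempty ∧ IsCompact K ∧
    ∀ K' : Set X, K'.Nonempty → IsCompact K' → steinerSum A K ≤ steinerSum A K'

/-- `d` is a solution vector for the boundary `A`: `d i = d_H(A_i, K)` for
some Steiner compact `K`. -/
def IsSolutionVector {X : Type*} [PseudoMetricSpace X] {n : ℕ}
    (A : Fin n → Set X) (d : Fin n → ℝ) : Prop :=
  ∃ K : Set X, IsSteinerCompact A K ∧ ∀ i, d i = Metric.hausdorffDist (A i) K

theorem stmt17 {X : Type*} [NormedAddCommGroup X] [NormedSpace ℝ X] [FiniteDimensional ℝ X]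
    (n : ℕ) (A : Fin n → Set X)
    (hA : ∀ j, (A j).Nonempty ∧ IsCompact (A j) ∧ Convex ℝ (A j))
    (d : Fin n → ℝ) (hd : IsSolutionVector A d) (hdpos : ∀ j, 0 < d j)
    (Kd : Set X) (hKd : Kd = ⋂ j, cthickening (d j) (A j))
    (F : Fin n → Set X) (hF : ∀ j, F j = {a ∈ A j | ball a (d j) ∩ Kd = ∅}) :
    ∀ i : Fin n, ∃ p ∈ ⋃ j, (cthickening (d j) (F j) ∩ Kd),
      p ∈ cthickening (d i) (F i) ∩ Kd ∨ p ∈ frontier (cthickening (d i) (A i)) := by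
  intro i
  obtain ⟨K₀, ⟨hK₀ne, hK₀c, hK₀min⟩, hdK₀⟩ := hd
  have hAne : ∀ j, (A j).Nonempty := fun j => (hA j).1
  have hAc : ∀ j, IsCompact (A j) := fun j => (hA j).2.1
  have hAconv : ∀ j, Convex ℝ (A j) := fun j => (hA j).2.2
  have hd0 : ∀ j, 0 ≤ d j := fun j => (hdpos j).le
  have hKdclosed : IsClosed Kd := by
    rw [hKd]; exact isClosed_iInter fun j => isClosed_cthickening
  have hedist : ∀ j, EMetric.hausdorffEdist (A j) K₀ ≠ ⊤ := fun j =>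
    Metric.hausdorffEdist_ne_top_of_nonempty_of_bounded (hAne j) hK₀ne
      (hAc j).isBounded hK₀c.isBounded
  -- K₀ ⊆ Kd
  have hK₀sub : K₀ ⊆ Kd := by
    intro x hx
    rw [hKd, mem_iInter]
    intro j
    refine (aux_mem_cthickening_iff (hAne j) (hd0 j)).2 ?_
    have h1 : infDist x (A j) ≤ hausdorffDist K₀ (A j) :=
      infDist_le_hausdorffDist_of_mem hx (by rw [EMetric.hausdorffEdist_comm]; exact hedist j)
    rw [hausdorffDist_comm] at h1
    exact h1.trans (le_of_eq (hdK₀ j).symm)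
  have hKdne : Kd.Nonempty := hK₀ne.mono hK₀sub
  have hKdsubi : Kd ⊆ cthickening (d i) (A i) := by
    rw [hKd]; exact iInter_subset _ i
  have hKdcomp : IsCompact Kd :=
    isCompact_of_isClosed_isBounded hKdclosed
      (((hAc i).isBounded.cthickening).subset hKdsubi)
  have hKdconv : Convex ℝ Kd := by
    rw [hKd]; exact convex_iInter fun j => (hAconv j).cthickening _
  have hsubthick : ∀ j, ∀ x ∈ Kd, infDist x (A j) ≤ d j := by
    intro j x hx
    rw [hKd, mem_iInter] at hx
    exact (aux_mem_cthickening_iff (hAne j) (hd0 j)).1 (hx j)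
  have hedistKd : ∀ j, EMetric.hausdorffEdist (A j) Kd ≠ ⊤ := fun j =>
    Metric.hausdorffEdist_ne_top_of_nonempty_of_bounded (hAne j) hKdne
      (hAc j).isBounded hKdcomp.isBounded
  -- d_H(A j, Kd) = d j
  have hHDle : ∀ j, hausdorffDist (A j) Kd ≤ d j := by
    intro j
    apply hausdorffDist_le_of_mem_dist (hd0 j)
    · intro a ha
      obtain ⟨y, hyK₀, hy⟩ := hK₀c.exists_infDist_eq_dist hK₀ne a
      refine ⟨y, hK₀sub hyK₀, ?_⟩
      rw [← hy]
      exact (infDist_le_hausdorffDist_of_mem ha (hedist j)).trans (le_of_eq (hdK₀ j).symm)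
    · intro y hy
      obtain ⟨x, hx, hxd⟩ := (hAc j).exists_infDist_eq_dist (hAne j) y
      refine ⟨x, hx, ?_⟩
      have := hsubthick j y hy
      rw [hxd] at this
      simpa [dist_comm] using this
  have hsumd : ∑ j, d j = steinerSum A K₀ := by
    unfold steinerSum
    exact Finset.sum_congr rfl fun j _ => hdK₀ j
  have hHD : ∀ j, hausdorffDist (A j) Kd = d j := by
    have hmin := hK₀min Kd hKdne hKdcomp
    have hsum2 : ∑ j, hausdorffDist (A j) Kd = ∑ j, d j := by
      have hle : ∑ j, hausdorffDist (A j) Kd ≤ ∑ j, d j :=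
        Finset.sum_le_sum fun j _ => hHDle j
      have hge : ∑ j, d j ≤ ∑ j, hausdorffDist (A j) Kd := by
        rw [hsumd]; exact hmin
      linarith
    intro j
    exact (Finset.sum_eq_sum_iff_of_le fun j _ => hHDle j).1 hsum2 j (Finset.mem_univ j)
  -- characterization of far points
  have hFar : ∀ j a, a ∈ A j → d j ≤ infDist a Kd → a ∈ F j := by
    intro j a ha hle
    rw [hF]
    refine ⟨ha, ?_⟩
    rw [eq_empty_iff_forall_notMem]
    rintro y ⟨hyb, hyK⟩
    have h1 : d j ≤ dist a y := le_trans hle (infDist_le_dist_of_mem hyK)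
    rw [mem_ball, dist_comm] at hyb
    linarith
  by_cases hcase : ∃ a ∈ A i, d i ≤ infDist a Kd
  · -- Case A : A i has a far point
    obtain ⟨a, haAi, hfar⟩ := hcase
    obtain ⟨p, hpKd, hpdist⟩ := hKdcomp.exists_infDist_eq_dist hKdne a
    have hle : infDist a Kd ≤ d i :=
      (infDist_le_hausdorffDist_of_mem haAi (hedistKd i)).trans (le_of_eq (hHD i))
    have hdap : dist a p ≤ d i := by rw [← hpdist]; exact hle
    have hpcth : p ∈ cthickening (d i) (F i) :=
      mem_cthickening_of_dist_le p a (d i) (F i) (hFar i a haAi hfar)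
        (by rw [dist_comm]; exact hdap)
    exact ⟨p, mem_iUnion.2 ⟨i, hpcth, hpKd⟩, Or.inl ⟨hpcth, hpKd⟩⟩
  · -- Case B : no far point in A i
    push_neg at hcase
    -- r = max over A i of infDist · Kd, r < d i
    obtain ⟨a₀, ha₀, hmax⟩ := (hAc i).exists_isMaxOn (hAne i)
      ((continuous_infDist_pt Kd).continuousOn)
    set r : ℝ := infDist a₀ Kd with hr
    have hrlt : r < d i := hcase a₀ ha₀
    have hrle : ∀ a ∈ A i, infDist a Kd ≤ r := fun a ha => hmax ha
    have hr0 : 0 ≤ r := infDist_nonneg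
    -- the approximating radii
    set s : ℕ → ℝ := fun k => d i - (d i - r) / ((k : ℝ) + 1) with hs
    have hsr : ∀ k, r ≤ s k := by
      intro k
      have h1 : (d i - r) / ((k : ℝ) + 1) ≤ (d i - r) := by
        apply div_le_self (by linarith)
        have : (0:ℝ) ≤ (k:ℝ) := Nat.cast_nonneg k
        linarith
      simp only [hs]
      linarith
    have hslt : ∀ k, s k < d i := by
      intro k
      have h1 : 0 < (d i - r) / ((k : ℝ) + 1) := div_pos (by linarith) (by positivity)
      simp only [hs]
      linarith
    have hs0 : ∀ k, 0 ≤ s k := fun k => hr0.trans (hsr k)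
    have hsmono : Monotone s := by
      intro k m hkm
      simp only [hs]
      have h2 : (d i - r) / ((m : ℝ) + 1) ≤ (d i - r) / ((k : ℝ) + 1) := by
        apply div_le_div_of_nonneg_left (by linarith) (by positivity)
        have : (k:ℝ) ≤ (m:ℝ) := Nat.cast_le.2 hkm
        linarith
      linarith
    -- the shrunk compacts
    set Ks : ℕ → Set X := fun k => Kd ∩ cthickening (s k) (A i) with hKs
    obtain ⟨q, hqKd, hqd⟩ := hKdcomp.exists_infDist_eq_dist hKdne a₀
    have hqAi : infDist q (A i) ≤ r := by
      rw [hr, hqd]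
      rw [dist_comm]
      exact infDist_le_dist_of_mem ha₀
    have hKsne : ∀ k, (Ks k).Nonempty :=
      fun k => ⟨q, hqKd, (aux_mem_cthickening_iff (hAne i) (hs0 k)).2 (hqAi.trans (hsr k))⟩
    have hKscl : ∀ k, IsClosed (Ks k) := fun k => hKdclosed.inter isClosed_cthickening
    have hKscomp : ∀ k, IsCompact (Ks k) :=
      fun k => hKdcomp.of_isClosed_subset (hKscl k) inter_subset_left
    have hKsmono : ∀ k m, k ≤ m → Ks k ⊆ Ks m := fun k m hkm =>
      inter_subset_inter subset_rfl (cthickening_mono (hsmono hkm) _)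
    -- key step: for each k some boundary set is "far" from Ks k
    have hstep : ∀ k, ∃ j, ∃ a ∈ A j, d j < infDist a (Ks k) := by
      intro k
      by_contra hcon
      push_neg at hcon
      have hHDj : ∀ j, hausdorffDist (A j) (Ks k) ≤ d j := by
        intro j
        apply hausdorffDist_le_of_mem_dist (hd0 j)
        · intro a ha
          obtain ⟨y, hy, hyd⟩ := (hKscomp k).exists_infDist_eq_dist (hKsne k) a
          exact ⟨y, hy, by rw [← hyd]; exact hcon j a ha⟩
        · intro y hy
          obtain ⟨x, hx, hxd⟩ := (hAc j).exists_infDist_eq_dist (hAne j) y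
          have := hsubthick j y hy.1
          rw [hxd] at this
          exact ⟨x, hx, by simpa [dist_comm] using this⟩
      have hHDi : hausdorffDist (A i) (Ks k) ≤ s k := by
        apply hausdorffDist_le_of_mem_dist (hs0 k)
        · intro a ha
          obtain ⟨p, hpKd, hpd⟩ := hKdcomp.exists_infDist_eq_dist hKdne a
          have hdap : dist a p ≤ r := by rw [← hpd]; exact hrle a ha
          have hpA : infDist p (A i) ≤ r :=
            (infDist_le_dist_of_mem ha).trans (by rwa [dist_comm])
          exact ⟨p, ⟨hpKd, (aux_mem_cthickening_iff (hAne i) (hs0 k)).2 (hpA.trans (hsr k))⟩,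
            hdap.trans (hsr k)⟩
        · intro y hy
          obtain ⟨x, hx, hxd⟩ := (hAc i).exists_infDist_eq_dist (hAne i) y
          have := (aux_mem_cthickening_iff (hAne i) (hs0 k)).1 hy.2
          rw [hxd] at this
          exact ⟨x, hx, by simpa [dist_comm] using this⟩
      have hlt : steinerSum A (Ks k) < ∑ j, d j := by
        unfold steinerSum
        refine Finset.sum_lt_sum (fun j _ => hHDj j) ⟨i, Finset.mem_univ i, ?_⟩
        exact lt_of_le_of_lt hHDi (hslt k)
      have := hK₀min (Ks k) (hKsne k) (hKscomp k)
      rw [← hsumd] at this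
      linarith
    choose jf af haf hgt using hstep
    -- pigeonhole : some j occurs for arbitrarily large k
    have hpig : ∃ j : Fin n, ∀ k, ∃ m, k ≤ m ∧ jf m = j := by
      by_contra hcon
      push_neg at hcon
      choose g hg using hcon
      set M := Finset.univ.sup g with hM
      exact hg (jf M) M (Finset.le_sup (Finset.mem_univ _)) rfl
    obtain ⟨j, hj⟩ := hpig
    -- the nested compact sets of pairs (a, p)
    set Z : ℕ → Set (X × X) := fun k =>
      ((A j ×ˢ Kd) ∩ {z : X × X | dist z.1 z.2 ≤ d j}) ∩
        ({z : X × X | s k ≤ infDist z.2 (A i)} ∩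
          {z : X × X | ∀ m ≤ k, d j ≤ infDist z.1 (Ks m)}) with hZ
    have hZcl : ∀ k, IsClosed (Z k) := by
      intro k
      have h1 : IsClosed (A j ×ˢ Kd) := (hAc j).isClosed.prod hKdclosed
      have h2 : IsClosed {z : X × X | dist z.1 z.2 ≤ d j} :=
        isClosed_le (continuous_fst.dist continuous_snd) continuous_const
      have h3 : IsClosed {z : X × X | s k ≤ infDist z.2 (A i)} :=
        isClosed_le continuous_const ((continuous_infDist_pt (A i)).comp continuous_snd)
      have h4 : IsClosed {z : X × X | ∀ m ≤ k, d j ≤ infDist z.1 (Ks m)} := by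
        have heq : {z : X × X | ∀ m ≤ k, d j ≤ infDist z.1 (Ks m)}
            = ⋂ m ∈ Set.Iic k, {z : X × X | d j ≤ infDist z.1 (Ks m)} := by
          ext z
          simp [Set.mem_iInter]
        rw [heq]
        exact isClosed_biInter fun m _ =>
          isClosed_le continuous_const ((continuous_infDist_pt (Ks m)).comp continuous_fst)
      exact (h1.inter h2).inter (h3.inter h4)
    have hZdec : ∀ k, Z (k + 1) ⊆ Z k := by
      rintro k z ⟨⟨hzp, hzd⟩, hz3, hz4⟩
      refine ⟨⟨hzp, hzd⟩, ?_, ?_⟩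
      · exact le_trans (hsmono (Nat.le_succ k)) hz3
      · intro m hm
        exact hz4 m (hm.trans (Nat.le_succ k))
    have hZne : ∀ k, (Z k).Nonempty := by
      intro k
      obtain ⟨m, hkm, hjm⟩ := hj k
      have haAj : af m ∈ A j := hjm ▸ haf m
      obtain ⟨p, hpKd, hpd⟩ := hKdcomp.exists_infDist_eq_dist hKdne (af m)
      have hdap : dist (af m) p ≤ d j := by
        rw [← hpd]
        exact (infDist_le_hausdorffDist_of_mem haAj (hedistKd j)).trans (le_of_eq (hHD j))
      have hpfar : s k ≤ infDist p (A i) := by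
        by_contra hcon
        push_neg at hcon
        have hpKs : p ∈ Ks m := ⟨hpKd, (aux_mem_cthickening_iff (hAne i) (hs0 m)).2
          ((hcon.le).trans (hsmono hkm))⟩
        have h5 : infDist (af m) (Ks m) ≤ dist (af m) p := infDist_le_dist_of_mem hpKs
        have h6 := hgt m
        rw [hjm] at h6
        linarith
      have hfm : ∀ m' ≤ k, d j ≤ infDist (af m) (Ks m') := by
        intro m' hm'
        have h7 : infDist (af m) (Ks m) ≤ infDist (af m) (Ks m') :=
          infDist_le_infDist_of_subset (hKsmono m' m (hm'.trans hkm)) (hKsne m')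
        have h6 := hgt m
        rw [hjm] at h6
        linarith
      exact ⟨(af m, p), ⟨⟨haAj, hpKd⟩, hdap⟩, hpfar, hfm⟩
    have hZ0 : IsCompact (Z 0) :=
      ((hAc j).prod hKdcomp).of_isClosed_subset (hZcl 0)
        (fun z hz => hz.1.1)
    obtain ⟨⟨a, p⟩, hz⟩ :=
      IsCompact.nonempty_iInter_of_sequence_nonempty_isCompact_isClosed Z hZdec hZne hZ0 hZcl
    rw [mem_iInter] at hz
    have haAj : a ∈ A j := (hz 0).1.1.1
    have hpKd : p ∈ Kd := (hz 0).1.1.2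
    have hap : dist a p ≤ d j := (hz 0).1.2
    have hpd : ∀ k, s k ≤ infDist p (A i) := fun k => (hz k).2.1
    have haKs : ∀ m, d j ≤ infDist a (Ks m) := fun m => (hz m).2.2 m le_rfl
    -- infDist p (A i) = d i
    have tendsto_s : Filter.Tendsto s Filter.atTop (nhds (d i)) := by
      have h2 := tendsto_one_div_add_atTop_nhds_zero_nat.const_mul (d i - r)
      have h3 := Filter.Tendsto.const_sub (d i) h2
      simpa [hs, mul_one_div, div_eq_mul_inv] using h3
    have hpAi : infDist p (A i) = d i :=
      le_antisymm (hsubthick i p hpKd) (le_of_tendsto' tendsto_s hpd)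
    -- a is a far point of A j
    have haKd : ∀ x ∈ Kd, d j ≤ dist a x := by
      intro x hx
      have key : ∀ k : ℕ, d j ≤ dist a x + (1 / ((k:ℝ) + 1)) * dist x q := by
        intro k
        set t : ℝ := 1 / ((k:ℝ) + 1) with htdef
        have ht0 : 0 ≤ t := by positivity
        have ht1 : t ≤ 1 := by
          rw [htdef, div_le_one (by positivity)]
          have : (0:ℝ) ≤ (k:ℝ) := Nat.cast_nonneg k
          linarith
        set y := (1 - t) • x + t • q with hydef
        have hyKd : y ∈ Kd := hKdconv hx hqKd (by linarith) ht0 (by ring)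
        have hcb := aux_infDist_combo (hAconv i) (hAc i) (hAne i) x q ht0 ht1
        have hxAi : infDist x (A i) ≤ d i := hsubthick i x hx
        have hyA : infDist y (A i) ≤ s k := by
          have hq0 : 0 ≤ infDist q (A i) := infDist_nonneg
          have hx0 : 0 ≤ infDist x (A i) := infDist_nonneg
          have h2 : (1 - t) * infDist x (A i) + t * infDist q (A i)
              ≤ (1 - t) * d i + t * r := by nlinarith
          have h3 : (1 - t) * d i + t * r = s k := by
            simp only [hs, htdef]
            field_simp
            ring
          calc infDist y (A i) ≤ (1 - t) * infDist x (A i) + t * infDist q (A i) := hcb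
            _ ≤ (1 - t) * d i + t * r := h2
            _ = s k := h3
        have hyKs : y ∈ Ks k := ⟨hyKd, (aux_mem_cthickening_iff (hAne i) (hs0 k)).2 hyA⟩
        have h4 : infDist a (Ks k) ≤ dist a y := infDist_le_dist_of_mem hyKs
        have h5 : dist a y ≤ dist a x + dist x y := dist_triangle a x y
        have h6 : dist x y = t * dist x q := by
          have h7 : x - y = t • (x - q) := by rw [hydef]; module
          rw [dist_eq_norm, h7, norm_smul, Real.norm_eq_abs, abs_of_nonneg ht0, ← dist_eq_norm]
        have h8 := haKs k
        linarith
      have hlim : Filter.Tendsto (fun k : ℕ => dist a x + (1 / ((k:ℝ) + 1)) * dist x q)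
          Filter.atTop (nhds (dist a x)) := by
        have := tendsto_one_div_add_atTop_nhds_zero_nat.mul_const (dist x q)
        simpa using tendsto_const_nhds.add this
      exact ge_of_tendsto' hlim key
    have haFj : a ∈ F j := hFar j a haAj (aux_le_infDist hKdne haKd)
    have hpcth : p ∈ cthickening (d j) (F j) :=
      mem_cthickening_of_dist_le p a (d j) (F j) haFj (by rw [dist_comm]; exact hap)
    have hfront : p ∈ frontier (cthickening (d i) (A i)) :=
      aux_mem_frontier (hAconv i) (hAc i) (hAne i) (hdpos i) hpAi
    exact ⟨p, mem_iUnion.2 ⟨j, hpcth, hpKd⟩, Or.inr hfront⟩
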